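/- Let H be a submonoid of (ℂ⟨⟨X⟩⟩, ·) containing the letters X and all exponentials e^{tx} for x ∈ X, t ∈ ℂ. If S is a continuous series over H (i.e. Σ_w |⟨S,w⟩⟨Φ,w⟩| < ∞ for all Φ ∈ H) that is indiscernable over H (i.e. Σ_w ⟨S,w⟩⟨Φ,w⟩ = 0 for all Φ ∈ H), then S = 0. -/

import Mathlib

/-- Cauchy (concatenation) product of two noncommutative series:
`⟨S·T, w⟩ = Σ_{uv = w} ⟨S,u⟩⟨T,v⟩`. -/
noncomputable def catMul {X : Type*} (S T : List X → ℂ) : List X → ℂ :=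
  fun w => ∑ i ∈ Finset.range (w.length + 1), S (w.take i) * T (w.drop i)

/-- The series `1` (the empty word). -/
noncomputable def oneSeries (X : Type*) [DecidableEq X] : List X → ℂ := fun w => if w = [] then 1 else 0

/-- The series associated to a letter `x`. -/
noncomputable def letterSeries {X : Type*} [DecidableEq X] (x : X) : List X → ℂ :=
  fun w => if w = [x] then 1 else 0

/-- The exponential series `e^{tx}`: its coefficient at `x^n` is `t^n/n!`, zero elsewhere. -/
noncomputable def expSeries {X : Type*} [DecidableEq X] (t : ℂ) (x : X) : List X → ℂ :=
  fun w => if w = List.replicate w.length x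
    then t ^ w.length / (Nat.factorial w.length : ℂ) else 0

/-- If `H` is a submonoid of `(ℂ⟨⟨X⟩⟩, ·)` containing the letters and the exponentials
`e^{tx}`, and `S` is continuous and indiscernable over `H`, then `S = 0`. -/
theorem stmt6 {X : Type*} [DecidableEq X] [Fintype X]
    (H : Set (List X → ℂ)) (S : List X → ℂ)
    (hone : oneSeries X ∈ H)
    (hmul : ∀ Φ ∈ H, ∀ Ψ ∈ H, catMul Φ Ψ ∈ H)
    (hletter : ∀ x : X, letterSeries x ∈ H)
    (hexp : ∀ (t : ℂ) (x : X), expSeries t x ∈ H)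
    (hcont : ∀ Φ ∈ H, Summable (fun w : List X => ‖S w‖ * ‖Φ w‖))
    (hindisc : ∀ Φ ∈ H, ∑' w : List X, S w * Φ w = 0) :
    S = 0 := by
  -- the indicator series of a single word
  have key : ∀ (x : X) (w : List X),
      catMul (letterSeries x) (fun u => if u = w then (1:ℂ) else 0)
        = (fun u => if u = x :: w then (1:ℂ) else 0) := by
    intro x w
    funext u
    cases u with
    | nil => simp [catMul, letterSeries]
    | cons y v =>
      show (∑ i ∈ Finset.range ((y :: v).length + 1),
        letterSeries x ((y :: v).take i) * (if (y :: v).drop i = w then (1:ℂ) else 0)) = _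
      rw [Finset.sum_eq_single 1]
      · by_cases hxy : y = x
        · subst hxy
          simp [letterSeries]
        · simp [letterSeries, hxy, fun h : y :: v = x :: w => hxy (List.cons.injEq .. ▸ h).1]
      · intro i hi hne
        have hi' : i < v.length + 2 := by simp at hi; omega
        have hlen : ((y :: v).take i).length = i := by
          rw [List.length_take]; simp; omega
        have : letterSeries x ((y :: v).take i) = 0 := by
          unfold letterSeries
          rw [if_neg]
          intro h
          rw [h] at hlen
          simp at hlen
          omega
        simp [this]
      · intro h
        exact absurd (by simp : 1 ∈ Finset.range ((y :: v).length + 1)) h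
  have hw : ∀ w : List X, (fun u => if u = w then (1:ℂ) else 0) ∈ H := by
    intro w
    induction w with
    | nil => exact hone
    | cons x v ih =>
      rw [← key x v]
      exact hmul _ (hletter x) _ ih
  funext w
  have h0 := hindisc _ (hw w)
  rw [tsum_eq_single w (by intro u hu; simp [hu])] at h0
  simpa using h0
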